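/- Assume additionally that a_i = 0 whenever λ_i = 0. Then the composite function γ ↦ h₁(h₂(γ)) is differentiable on [1, ∞) and for every γ ≥ 1, |d/dγ [h₁(h₂(γ))]| ≤ Δ_Σ² · Δ_R² / (M + s_min)². In particular, if Δ_Σ · Δ_R < M + s_min, then |d/dγ [h₁(h₂(γ))]| < 1 for every γ ≥ 1. -/

import Mathlib

open Finset

/-- `h₁(γ̄) = (Σᵢ λᵢ aᵢ²/(1+λᵢγ̄)²) · (Σᵢ aᵢ²/(1+λᵢγ̄)²)⁻¹`. -/
noncomputable def h1 {n : ℕ} (lam a : Fin n → ℝ) (γ : ℝ) : ℝ :=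
  (∑ i, lam i * a i ^ 2 / (1 + lam i * γ) ^ 2) * (∑ i, a i ^ 2 / (1 + lam i * γ) ^ 2)⁻¹

/-- `h₂(γ) = (1 + M·(Σᵢ sᵢ²/(M+sᵢγ)²)·(Σᵢ sᵢ³/(M+sᵢγ)²)⁻¹)⁻¹`. -/
noncomputable def h2 {d : ℕ} (s : Fin d → ℝ) (M γ : ℝ) : ℝ :=
  (1 + M * (∑ i, s i ^ 2 / (M + s i * γ) ^ 2) * (∑ i, s i ^ 3 / (M + s i * γ) ^ 2)⁻¹)⁻¹

/-- Contraction bound. Assuming `aᵢ = 0` whenever `λᵢ = 0`,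
the map `γ ↦ h₁(h₂(γ))` is differentiable on `[1, ∞)` with
`|d/dγ h₁(h₂(γ))| ≤ Δ_Σ² Δ_R²/(M + s_min)²`; in particular, if
`Δ_Σ Δ_R < M + s_min` then `|d/dγ h₁(h₂(γ))| < 1` on `[1, ∞)`. -/
lemma cov_identity {n : ℕ} (w x u : Fin n → ℝ) :
    ∑ i, ∑ j, w i * w j * ((x i - x j) * (u i - u j))
      = 2 * ((∑ i, x i * u i * w i) * (∑ i, w i) - (∑ i, x i * w i) * (∑ i, u i * w i)) := by
  have e : ∀ i j : Fin n, w i * w j * ((x i - x j) * (u i - u j))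
      = (x i * u i * w i) * w j + (x j * u j * w j) * w i
        - ((x i * w i) * (u j * w j) + (x j * w j) * (u i * w i)) := by
    intro i j; ring
  simp only [e, Finset.sum_sub_distrib, Finset.sum_add_distrib, ← Finset.sum_mul,
    ← Finset.mul_sum]
  ring

lemma abs_dsum_le {n : ℕ} (f g : Fin n → Fin n → ℝ) (h : ∀ i j, |f i j| ≤ g i j) :
    |∑ i, ∑ j, f i j| ≤ ∑ i, ∑ j, g i j := by
  refine (Finset.abs_sum_le_sum_abs _ _).trans (Finset.sum_le_sum fun i _ => ?_)
  exact (Finset.abs_sum_le_sum_abs _ _).trans (Finset.sum_le_sum fun j _ => h i j)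

lemma final_ineq (M X E BMA smin DS : ℝ) (hM : 0 < M) (hMsmin : 0 < M + smin)
    (hBMA : 0 < BMA) (hE : 0 ≤ E)
    (habs : X ≤ M * DS ^ 2 * E ^ 2) (hkey : M * (M + smin) * E ≤ BMA) :
    M * X / BMA ^ 2 ≤ DS ^ 2 / (M + smin) ^ 2 := by
  rw [div_le_div_iff₀ (pow_pos hBMA 2) (pow_pos hMsmin 2)]
  have hsq : (M * (M + smin) * E) ^ 2 ≤ BMA ^ 2 := by
    apply pow_le_pow_left₀ _ hkey
    positivity
  have h1 : M * X ≤ M * (M * DS ^ 2 * E ^ 2) := mul_le_mul_of_nonneg_left habs hM.le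
  have h2 : M * X * (M + smin) ^ 2 ≤ M * (M * DS ^ 2 * E ^ 2) * (M + smin) ^ 2 :=
    mul_le_mul_of_nonneg_right h1 (sq_nonneg _)
  have h3 : M * (M * DS ^ 2 * E ^ 2) * (M + smin) ^ 2 = DS ^ 2 * (M * (M + smin) * E) ^ 2 := by
    ring
  have h4 : DS ^ 2 * (M * (M + smin) * E) ^ 2 ≤ DS ^ 2 * BMA ^ 2 :=
    mul_le_mul_of_nonneg_left hsq (sq_nonneg DS)
  linarith

lemma key_ineq (M smin si γ : ℝ) (hM : 0 < M) (hsi : 0 < si)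
    (hsmin : smin ≤ si) (hγ : 1 ≤ γ) :
    M * (M + smin) ≤ (si + M) * (M + si * γ) := by
  nlinarith [mul_le_mul_of_nonneg_left hsmin hM.le,
    mul_pos (mul_pos hsi hsi) (lt_of_lt_of_le one_pos hγ),
    mul_pos (mul_pos hM hsi) (lt_of_lt_of_le one_pos hγ)]

lemma inv_form_deriv (Af Bf : ℝ → ℝ) (A B A' B' M γ : ℝ)
    (hAder : HasDerivAt Af A' γ) (hBder : HasDerivAt Bf B' γ)
    (hAv : Af γ = A) (hBv : Bf γ = B) (hBne : B ≠ 0)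
    (hGne : (1 + M * A * B⁻¹) ≠ 0) :
    HasDerivAt (fun x => (1 + M * Af x * (Bf x)⁻¹)⁻¹)
      (M * (A * B' - A' * B) / (B + M * A) ^ 2) γ := by
  have hBne' : Bf γ ≠ 0 := by rw [hBv]; exact hBne
  have hmul := (((hAder.const_mul M).fun_mul (hBder.fun_inv hBne')).const_add 1).fun_inv
    (by simpa [hAv, hBv] using hGne)
  refine hmul.congr_deriv ?_
  rw [hAv, hBv]
  have hBMA : B + M * A ≠ 0 := by
    intro h
    apply hGne
    rw [show (1 : ℝ) + M * A * B⁻¹ = (B + M * A) * B⁻¹ by field_simp, h, zero_mul]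
  field_simp
  ring

lemma h1_bound {n : ℕ} (lam a : Fin n → ℝ) (hlam : ∀ i, 0 ≤ lam i)
    (ha : ∃ i, a i ≠ 0) (ha0 : ∀ i, lam i = 0 → a i = 0)
    (lmax lmin : ℝ)
    (hlmax : IsGreatest {x | ∃ i, lam i = x ∧ x ≠ 0} lmax)
    (hlmin : IsLeast {x | ∃ i, lam i = x ∧ x ≠ 0} lmin)
    (γ : ℝ) (hγ : 0 ≤ γ) :
    ∃ D1, HasDerivAt (h1 lam a) D1 γ ∧ |D1| ≤ (lmax - lmin) ^ 2 := by
  have hpos : ∀ i, 0 < 1 + lam i * γ := fun i => by nlinarith [mul_nonneg (hlam i) hγ]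
  have hne : ∀ i, (1 + lam i * γ) ≠ 0 := fun i => ne_of_gt (hpos i)
  set w : Fin n → ℝ := fun i => a i ^ 2 / (1 + lam i * γ) ^ 2 with hw
  set u : Fin n → ℝ := fun i => lam i / (1 + lam i * γ) with hu
  have hwn : ∀ i, 0 ≤ w i := fun i => by rw [hw]; positivity
  set N : ℝ := ∑ i, lam i * a i ^ 2 / (1 + lam i * γ) ^ 2 with hN
  set D : ℝ := ∑ i, w i with hD
  set N' : ℝ := ∑ i, -2 * (lam i * u i * w i) with hN'
  set D' : ℝ := ∑ i, -2 * (u i * w i) with hD'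
  have hDpos : 0 < D := by
    obtain ⟨i0, hi0⟩ := ha
    refine Finset.sum_pos' (fun i _ => hwn i) ⟨i0, Finset.mem_univ i0, ?_⟩
    rw [hw]
    have := hpos i0
    positivity
  have hDne : D ≠ 0 := ne_of_gt hDpos
  have hNder : HasDerivAt (fun x => ∑ i, lam i * a i ^ 2 / (1 + lam i * x) ^ 2) N' γ := by
    rw [hN']
    apply HasDerivAt.fun_sum
    intro i _
    have hb : HasDerivAt (fun x : ℝ => (1 + lam i * x) ^ 2) (2 * (1 + lam i * γ) * lam i) γ := by
      have h0 : HasDerivAt (fun x : ℝ => 1 + lam i * x) (lam i) γ := by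
        simpa using ((hasDerivAt_id γ).const_mul (lam i)).const_add 1
      simpa [mul_comm] using h0.fun_pow 2
    have := (hasDerivAt_const γ (lam i * a i ^ 2)).fun_div hb (pow_ne_zero 2 (hne i))
    refine this.congr_deriv ?_
    rw [hu, hw]
    field_simp [hne i]
    ring
  have hDder : HasDerivAt (fun x => ∑ i, a i ^ 2 / (1 + lam i * x) ^ 2) D' γ := by
    rw [hD']
    apply HasDerivAt.fun_sum
    intro i _
    have hb : HasDerivAt (fun x : ℝ => (1 + lam i * x) ^ 2) (2 * (1 + lam i * γ) * lam i) γ := by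
      have h0 : HasDerivAt (fun x : ℝ => 1 + lam i * x) (lam i) γ := by
        simpa using ((hasDerivAt_id γ).const_mul (lam i)).const_add 1
      simpa [mul_comm] using h0.fun_pow 2
    have := (hasDerivAt_const γ (a i ^ 2)).fun_div hb (pow_ne_zero 2 (hne i))
    refine this.congr_deriv ?_
    rw [hu, hw]
    field_simp [hne i]
    ring
  have hDval : (∑ i, a i ^ 2 / (1 + lam i * γ) ^ 2) = D := rfl
  have hder : HasDerivAt (h1 lam a) ((N' * D - N * D') / D ^ 2) γ := by
    have hmul := hNder.fun_mul ((hDder.fun_inv (by rw [hDval]; exact hDne)))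
    have : h1 lam a = fun x =>
        (∑ i, lam i * a i ^ 2 / (1 + lam i * x) ^ 2) * (∑ i, a i ^ 2 / (1 + lam i * x) ^ 2)⁻¹ :=
      rfl
    rw [this]
    refine hmul.congr_deriv ?_
    rw [hDval]
    field_simp
    ring
  refine ⟨_, hder, ?_⟩
  -- the covariance identity
  have hid : N' * D - N * D' =
      -(∑ i, ∑ j, w i * w j * ((lam i - lam j) * (u i - u j))) := by
    rw [cov_identity]
    have e2 : N = ∑ i, lam i * w i := Finset.sum_congr rfl fun i _ => mul_div_assoc _ _ _
    rw [hN', hD', e2, ← Finset.mul_sum, ← Finset.mul_sum]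
    ring
  have hDRnn : (0:ℝ) ≤ lmax - lmin := by
    have := hlmin.2 hlmax.1
    linarith
  -- per-term bound
  have hterm : ∀ i j, |w i * w j * ((lam i - lam j) * (u i - u j))|
      ≤ w i * w j * (lmax - lmin) ^ 2 := by
    intro i j
    by_cases hai : a i = 0
    · have : w i = 0 := by rw [hw]; simp [hai]
      simp [this]
    by_cases haj : a j = 0
    · have : w j = 0 := by rw [hw]; simp [haj]
      simp [this]
    have hli : lam i ≠ 0 := fun h => hai (ha0 i h)
    have hlj : lam j ≠ 0 := fun h => haj (ha0 j h)
    have hbi1 : lmin ≤ lam i := hlmin.2 ⟨i, rfl, hli⟩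
    have hbi2 : lam i ≤ lmax := hlmax.2 ⟨i, rfl, hli⟩
    have hbj1 : lmin ≤ lam j := hlmin.2 ⟨j, rfl, hlj⟩
    have hbj2 : lam j ≤ lmax := hlmax.2 ⟨j, rfl, hlj⟩
    have habsl : |lam i - lam j| ≤ lmax - lmin := abs_le.mpr ⟨by linarith, by linarith⟩
    have hueq : u i - u j = (lam i - lam j) / ((1 + lam i * γ) * (1 + lam j * γ)) := by
      rw [hu]
      dsimp only
      rw [div_sub_div _ _ (hne i) (hne j)]
      ring
    have habsu : |u i - u j| ≤ |lam i - lam j| := by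
      rw [hueq, abs_div]
      have h1le : (1:ℝ) ≤ (1 + lam i * γ) * (1 + lam j * γ) := by
        nlinarith [mul_nonneg (hlam i) hγ, mul_nonneg (hlam j) hγ]
      rw [abs_of_pos (by nlinarith : (0:ℝ) < (1 + lam i * γ) * (1 + lam j * γ))]
      exact div_le_self (abs_nonneg _) h1le
    calc |w i * w j * ((lam i - lam j) * (u i - u j))|
        = w i * w j * (|lam i - lam j| * |u i - u j|) := by
          rw [abs_mul, abs_mul, abs_mul, abs_of_nonneg (hwn i), abs_of_nonneg (hwn j)]
      _ ≤ w i * w j * ((lmax - lmin) * (lmax - lmin)) := by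
          apply mul_le_mul_of_nonneg_left _ (mul_nonneg (hwn i) (hwn j))
          exact mul_le_mul habsl (habsu.trans habsl) (abs_nonneg _) hDRnn
      _ = w i * w j * (lmax - lmin) ^ 2 := by ring
  have hsum : ∑ i, ∑ j, w i * w j * (lmax - lmin) ^ 2 = (lmax - lmin) ^ 2 * D ^ 2 := by
    have hin : ∀ i : Fin n, ∑ j, w i * w j * (lmax - lmin) ^ 2
        = w i * (D * (lmax - lmin) ^ 2) := by
      intro i
      rw [← Finset.sum_mul, ← Finset.mul_sum, mul_assoc, hD]
    rw [Finset.sum_congr rfl fun i _ => hin i, ← Finset.sum_mul, ← hD]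
    ring
  calc |(N' * D - N * D') / D ^ 2| = |N' * D - N * D'| / D ^ 2 := by
        rw [abs_div, abs_of_pos (pow_pos hDpos 2)]
    _ ≤ ((lmax - lmin) ^ 2 * D ^ 2) / D ^ 2 := by
        gcongr
        rw [hid, abs_neg, ← hsum]
        exact abs_dsum_le _ _ hterm
    _ = (lmax - lmin) ^ 2 := by
        rw [mul_div_assoc, div_self (pow_ne_zero 2 hDne), mul_one]

lemma h2_bound {d : ℕ} (s : Fin d → ℝ) (hd : 0 < d) (hs : ∀ i, 0 < s i) (M : ℝ) (hM : 0 < M)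
    (smax smin : ℝ)
    (hsmax : IsGreatest (Set.range s) smax) (hsmin : IsLeast (Set.range s) smin)
    (γ : ℝ) (hγ : 1 ≤ γ) :
    0 ≤ h2 s M γ ∧
      ∃ D2, HasDerivAt (h2 s M) D2 γ ∧ |D2| ≤ (smax - smin) ^ 2 / (M + smin) ^ 2 := by
  haveI : Nonempty (Fin d) := ⟨⟨0, hd⟩⟩
  have hγ0 : (0:ℝ) < γ := lt_of_lt_of_le one_pos hγ
  have hpos : ∀ i, 0 < M + s i * γ := fun i => by nlinarith [hs i]
  have hne : ∀ i, (M + s i * γ) ≠ 0 := fun i => ne_of_gt (hpos i)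
  obtain ⟨c, hc⟩ : ∃ c : Fin d → ℝ, c = fun i => s i ^ 2 / (M + s i * γ) ^ 2 := ⟨_, rfl⟩
  obtain ⟨t, ht⟩ : ∃ t : Fin d → ℝ, t = fun i => s i / (M + s i * γ) := ⟨_, rfl⟩
  obtain ⟨e, he⟩ : ∃ e : Fin d → ℝ, e = fun i => c i / (M + s i * γ) := ⟨_, rfl⟩
  have hcn : ∀ i, 0 < c i := fun i => by rw [hc]; have := hpos i; have := hs i; positivity
  have hen : ∀ i, 0 < e i := fun i => by rw [he]; exact div_pos (hcn i) (hpos i)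
  obtain ⟨A, hA⟩ : ∃ A : ℝ, A = ∑ i, s i ^ 2 / (M + s i * γ) ^ 2 := ⟨_, rfl⟩
  obtain ⟨B, hB⟩ : ∃ B : ℝ, B = ∑ i, s i ^ 3 / (M + s i * γ) ^ 2 := ⟨_, rfl⟩
  obtain ⟨A', hA'⟩ : ∃ A' : ℝ, A' = ∑ i, -2 * (t i * c i) := ⟨_, rfl⟩
  obtain ⟨B', hB'⟩ : ∃ B' : ℝ, B' = ∑ i, -2 * (s i * t i * c i) := ⟨_, rfl⟩
  obtain ⟨E, hE⟩ : ∃ E : ℝ, E = ∑ i, e i := ⟨_, rfl⟩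
  have hApos : 0 < A := by
    rw [hA, show (∑ i, s i ^ 2 / (M + s i * γ) ^ 2) = ∑ i, c i from
      (Finset.sum_congr rfl fun i _ => by rw [hc])]
    exact Finset.sum_pos (fun i _ => hcn i) Finset.univ_nonempty
  have hBpos : 0 < B := by
    rw [hB]
    exact Finset.sum_pos
      (fun i _ => by have := hpos i; have := hs i; positivity) Finset.univ_nonempty
  have hBne : B ≠ 0 := ne_of_gt hBpos
  have hEpos : 0 < E := by
    rw [hE]; exact Finset.sum_pos (fun i _ => hen i) Finset.univ_nonempty
  have hGpos : 0 < 1 + M * A * B⁻¹ := by positivity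
  have hGne : (1 + M * A * B⁻¹) ≠ 0 := ne_of_gt hGpos
  have hBMApos : 0 < B + M * A := by positivity
  -- h2 value positivity
  have hval : h2 s M γ = (1 + M * A * B⁻¹)⁻¹ := by rw [hA, hB]; rfl
  constructor
  · rw [hval]; positivity
  -- derivatives
  have hAder : HasDerivAt (fun x => ∑ i, s i ^ 2 / (M + s i * x) ^ 2) A' γ := by
    rw [hA']
    apply HasDerivAt.fun_sum
    intro i _
    have hb : HasDerivAt (fun x : ℝ => (M + s i * x) ^ 2) (2 * (M + s i * γ) * s i) γ := by
      have h0 : HasDerivAt (fun x : ℝ => M + s i * x) (s i) γ := by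
        simpa using ((hasDerivAt_id γ).const_mul (s i)).const_add M
      simpa [mul_comm] using h0.fun_pow 2
    have := (hasDerivAt_const γ (s i ^ 2)).fun_div hb (pow_ne_zero 2 (hne i))
    refine this.congr_deriv ?_
    rw [ht, hc]
    field_simp [hne i]
    ring
  have hBder : HasDerivAt (fun x => ∑ i, s i ^ 3 / (M + s i * x) ^ 2) B' γ := by
    rw [hB']
    apply HasDerivAt.fun_sum
    intro i _
    have hb : HasDerivAt (fun x : ℝ => (M + s i * x) ^ 2) (2 * (M + s i * γ) * s i) γ := by
      have h0 : HasDerivAt (fun x : ℝ => M + s i * x) (s i) γ := by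
        simpa using ((hasDerivAt_id γ).const_mul (s i)).const_add M
      simpa [mul_comm] using h0.fun_pow 2
    have := (hasDerivAt_const γ (s i ^ 3)).fun_div hb (pow_ne_zero 2 (hne i))
    refine this.congr_deriv ?_
    rw [ht, hc]
    field_simp [hne i]
    ring
  have hder : HasDerivAt (h2 s M) (M * (A * B' - A' * B) / (B + M * A) ^ 2) γ := by
    have hfun : h2 s M = fun x =>
        (1 + M * (∑ i, s i ^ 2 / (M + s i * x) ^ 2)
          * (∑ i, s i ^ 3 / (M + s i * x) ^ 2)⁻¹)⁻¹ := rfl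
    rw [hfun]
    exact inv_form_deriv _ _ A B A' B' M γ hAder hBder hA.symm hB.symm hBne hGne
  refine ⟨_, hder, ?_⟩
  -- covariance identity
  have hB2 : B = ∑ i, s i * c i := by
    rw [hB]
    refine Finset.sum_congr rfl fun i _ => ?_
    rw [hc]
    have := hne i
    field_simp
  have hA2 : A = ∑ i, c i := by rw [hA, hc]
  have hid : A * B' - A' * B =
      -(∑ i, ∑ j, c i * c j * ((s i - s j) * (t i - t j))) := by
    rw [cov_identity, hA', hB', hB2, hA2, ← Finset.mul_sum, ← Finset.mul_sum]
    ring
  have hsle : ∀ i, smin ≤ s i := fun i => hsmin.2 ⟨i, rfl⟩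
  have hsge : ∀ i, s i ≤ smax := fun i => hsmax.2 ⟨i, rfl⟩
  have hDSnn : (0:ℝ) ≤ smax - smin := by
    have := (hsle ⟨0, hd⟩).trans (hsge ⟨0, hd⟩); linarith
  have hMsmin : 0 < M + smin := by
    obtain ⟨i0, hi0⟩ := hsmin.1
    have := hs i0
    linarith [hi0.ge, hi0.le]
  -- per-term bound
  have hterm : ∀ i j, |c i * c j * ((s i - s j) * (t i - t j))|
      ≤ M * (smax - smin) ^ 2 * (e i * e j) := by
    intro i j
    have hteq : (s i - s j) * (t i - t j)
        = M * (s i - s j) ^ 2 / ((M + s i * γ) * (M + s j * γ)) := by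
      rw [ht]
      field_simp [hne i, hne j]
      ring
    have heq : c i * c j * ((s i - s j) * (t i - t j))
        = M * (s i - s j) ^ 2 * (e i * e j) := by
      rw [hteq, he]
      field_simp
    rw [heq, abs_of_nonneg (mul_nonneg (mul_nonneg hM.le (sq_nonneg _))
      (mul_pos (hen i) (hen j)).le)]
    have hsd : (s i - s j) ^ 2 ≤ (smax - smin) ^ 2 := by
      have h1 := hsle i; have h2 := hsge i; have h3 := hsle j; have h4 := hsge j
      exact sq_le_sq' (by linarith) (by linarith)
    exact mul_le_mul_of_nonneg_right (mul_le_mul_of_nonneg_left hsd hM.le)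
      (mul_pos (hen i) (hen j)).le
  have hsum : ∑ i, ∑ j, M * (smax - smin) ^ 2 * (e i * e j)
      = M * (smax - smin) ^ 2 * E ^ 2 := by
    have hin : ∀ i : Fin d, ∑ j, M * (smax - smin) ^ 2 * (e i * e j)
        = M * (smax - smin) ^ 2 * e i * E := by
      intro i
      rw [hE, Finset.mul_sum]
      exact Finset.sum_congr rfl fun j _ => by ring
    rw [Finset.sum_congr rfl fun i _ => hin i, ← Finset.sum_mul, ← Finset.mul_sum, ← hE]
    ring
  have habs : |A * B' - A' * B| ≤ M * (smax - smin) ^ 2 * E ^ 2 := by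
    rw [hid, abs_neg, ← hsum]
    exact abs_dsum_le _ _ hterm
  -- key comparison
  have hkey : M * (M + smin) * E ≤ B + M * A := by
    have hBMA2 : B + M * A = ∑ i, (s i + M) * c i := by
      rw [hB2, hA, Finset.mul_sum, ← Finset.sum_add_distrib]
      refine Finset.sum_congr rfl fun i _ => ?_
      rw [hc]
      ring
    rw [hBMA2, hE, Finset.mul_sum]
    refine Finset.sum_le_sum fun i _ => ?_
    have h1 : M * (M + smin) ≤ (s i + M) * (M + s i * γ) :=
      key_ineq M smin (s i) γ hM (hs i) (hsle i) hγ
    have hei : e i = c i / (M + s i * γ) := by simp only [he]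
    rw [hei]
    rw [div_eq_mul_inv, ← mul_assoc]
    rw [show (s i + M) * c i = ((s i + M) * (M + s i * γ) * c i) * (M + s i * γ)⁻¹ by
      rw [show (s i + M) * (M + s i * γ) * c i * (M + s i * γ)⁻¹
          = (s i + M) * c i * ((M + s i * γ) * (M + s i * γ)⁻¹) from by ring,
        mul_inv_cancel₀ (hne i), mul_one]]
    apply mul_le_mul_of_nonneg_right _ (inv_nonneg.mpr (hpos i).le)
    exact mul_le_mul_of_nonneg_right h1 (le_of_lt (hcn i))
  -- final bound
  have habs2 : |M * (A * B' - A' * B) / (B + M * A) ^ 2|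
      = M * |A * B' - A' * B| / (B + M * A) ^ 2 := by
    rw [abs_div, abs_mul, abs_of_pos hM, abs_of_pos (pow_pos hBMApos 2)]
  rw [habs2]
  exact final_ineq M _ E (B + M * A) smin (smax - smin) hM hMsmin hBMApos hEpos.le
    habs hkey

theorem stmt5 (d n : ℕ) (hd : 0 < d) (hn : 0 < n)
    (s : Fin d → ℝ) (hs : ∀ i, 0 < s i)
    (lam : Fin n → ℝ) (hlam : ∀ i, 0 ≤ lam i)
    (a : Fin n → ℝ) (ha : ∃ i, a i ≠ 0)
    (σ : ℝ) (hσ : 0 ≤ σ)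
    (M : ℝ) (hM : M = σ ^ 2 + ∑ i, s i)
    (ha0 : ∀ i, lam i = 0 → a i = 0)
    (smax smin : ℝ)
    (hsmax : IsGreatest (Set.range s) smax) (hsmin : IsLeast (Set.range s) smin)
    (lmax lmin : ℝ)
    (hlmax : IsGreatest {x | ∃ i, lam i = x ∧ x ≠ 0} lmax)
    (hlmin : IsLeast {x | ∃ i, lam i = x ∧ x ≠ 0} lmin)
    (DS DR : ℝ) (hDS : DS = smax - smin) (hDR : DR = lmax - lmin) :
    (∀ γ : ℝ, 1 ≤ γ →
      DifferentiableAt ℝ (fun t => h1 lam a (h2 s M t)) γ ∧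
      |deriv (fun t => h1 lam a (h2 s M t)) γ| ≤ DS ^ 2 * DR ^ 2 / (M + smin) ^ 2) ∧
    (DS * DR < M + smin →
      ∀ γ : ℝ, 1 ≤ γ → |deriv (fun t => h1 lam a (h2 s M t)) γ| < 1) := by
  
  obtain ⟨i0, hi0⟩ := hsmin.1
  have hM0 : 0 < M := by
    rw [hM]
    haveI : Nonempty (Fin d) := ⟨⟨0, hd⟩⟩
    have h1 : 0 < ∑ i, s i := Finset.sum_pos (fun i _ => hs i) Finset.univ_nonempty
    positivity
  have hMsmin : 0 < M + smin := by
    have := hs i0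
    linarith [hi0.ge, hi0.le]
  have main : ∀ γ : ℝ, 1 ≤ γ →
      DifferentiableAt ℝ (fun t => h1 lam a (h2 s M t)) γ ∧
      |deriv (fun t => h1 lam a (h2 s M t)) γ| ≤ DS ^ 2 * DR ^ 2 / (M + smin) ^ 2 := by
    intro γ hγ
    obtain ⟨hpos2, D2, hd2, hb2⟩ := h2_bound s hd hs M hM0 smax smin hsmax hsmin γ hγ
    obtain ⟨D1, hd1, hb1⟩ := h1_bound lam a hlam ha ha0 lmax lmin hlmax hlmin
      (h2 s M γ) hpos2
    have hcomp : HasDerivAt (fun t => h1 lam a (h2 s M t)) (D1 * D2) γ := hd1.comp γ hd2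
    refine ⟨hcomp.differentiableAt, ?_⟩
    rw [hcomp.deriv, abs_mul]
    calc |D1| * |D2| ≤ (lmax - lmin) ^ 2 * ((smax - smin) ^ 2 / (M + smin) ^ 2) :=
          mul_le_mul hb1 hb2 (abs_nonneg _) (sq_nonneg _)
      _ = DS ^ 2 * DR ^ 2 / (M + smin) ^ 2 := by rw [hDS, hDR]; ring
  refine ⟨main, fun hlt γ hγ => lt_of_le_of_lt (main γ hγ).2 ?_⟩
  have hDSnn : 0 ≤ DS := by
    rw [hDS]
    linarith [hsmin.2 hsmax.1]
  have hDRnn : 0 ≤ DR := by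
    rw [hDR]
    linarith [hlmin.2 hlmax.1]
  rw [div_lt_one (pow_pos hMsmin 2)]
  nlinarith [mul_nonneg hDSnn hDRnn, hlt, hMsmin]
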